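/- The dual values of the MPLP++ iterates converge: for any pairwise graphical model (V, E, Y, θ) and any fixed edge ordering, the real sequence i ↦ D(H^i(θ)) is nondecreasing, bounded above, and hence converges to a limit in ℝ. -/

import Mathlib

/-- Minimum of a real-valued function over a finite nonempty type. -/
noncomputable def fmin {Y : Type*} [Fintype Y] [Nonempty Y] (f : Y → ℝ) : ℝ :=
  Finset.univ.inf' Finset.univ_nonempty f

/-- The cost vector of a pairwise graphical model: unary costs for every vertex and
pairwise costs for every (potential) edge. -/
structure Costs (V Y : Type*) where
  un : V → Y → ℝ
  pw : V × V → Y × Y → ℝ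

/-- The dual value `D(θ) = Σ_u min_s θ_u(s) + Σ_{uv∈E} min_{(s,t)} θ_uv(s,t)`. -/
noncomputable def dual {V Y : Type*} [Fintype V] [Fintype Y] [Nonempty Y]
    (E : Finset (V × V)) (c : Costs V Y) : ℝ :=
  (∑ u, fmin (c.un u)) + ∑ e ∈ E, fmin (c.pw e)

/-- One MPLP++ edge update of the cost vector at edge `e = (u,v)`. -/
noncomputable def processEdge {V Y : Type*} [Fintype Y] [Nonempty Y] [DecidableEq V]
    (c : Costs V Y) (e : V × V) : Costs V Y :=
  let g : Y × Y → ℝ := fun p => c.un e.1 p.1 + c.un e.2 p.2 + c.pw e p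
  let θM : Y → ℝ := fun s => (1 / 2) * fmin (fun t => g (s, t))
  let θHv : Y → ℝ := fun t => fmin (fun s => g (s, t) - θM s)
  let θHu : Y → ℝ := fun s => fmin (fun t => g (s, t) - θHv t)
  { un := fun w => if w = e.1 then θHu else if w = e.2 then θHv else c.un w
    pw := fun e' => if e' = e then (fun p => g p - θHu p.1 - θHv p.2) else c.pw e' }

/-- One MPLP++ iteration `H`: process all edges in the given fixed order. -/
noncomputable def mplppIter {V Y : Type*} [Fintype Y] [Nonempty Y] [DecidableEq V]
    (order : List (V × V)) (c : Costs V Y) : Costs V Y :=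
  order.foldl processEdge c

section aux

variable {V Y : Type*} [Fintype Y] [Nonempty Y] [DecidableEq V]

lemma fmin_le (f : Y → ℝ) (y : Y) : fmin f ≤ f y :=
  Finset.inf'_le _ (Finset.mem_univ y)

lemma le_fmin {f : Y → ℝ} {a : ℝ} (h : ∀ y, a ≤ f y) : a ≤ fmin f :=
  Finset.le_inf' _ _ fun y _ => h y

/-- The pencil `g` of an edge update. -/
noncomputable def gE (c : Costs V Y) (e : V × V) : Y × Y → ℝ :=
  fun p => c.un e.1 p.1 + c.un e.2 p.2 + c.pw e p

noncomputable def thM (c : Costs V Y) (e : V × V) : Y → ℝ :=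
  fun s => (1 / 2) * fmin (fun t => gE c e (s, t))

noncomputable def thV (c : Costs V Y) (e : V × V) : Y → ℝ :=
  fun t => fmin (fun s => gE c e (s, t) - thM c e s)

noncomputable def thU (c : Costs V Y) (e : V × V) : Y → ℝ :=
  fun s => fmin (fun t => gE c e (s, t) - thV c e t)

lemma processEdge_eq (c : Costs V Y) (e : V × V) :
    processEdge c e =
      { un := fun w => if w = e.1 then thU c e else if w = e.2 then thV c e else c.un w
        pw := fun e' => if e' = e then (fun p => gE c e p - thU c e p.1 - thV c e p.2)
                        else c.pw e' } := rfl

lemma thV_ge (c : Costs V Y) (e : V × V) (t : Y) :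
    (1 / 2) * fmin (gE c e) ≤ thV c e t := by
  refine le_fmin fun s => ?_
  have h1 : fmin (gE c e) ≤ fmin (fun t' => gE c e (s, t')) :=
    le_fmin fun t' => fmin_le _ _
  have h2 : fmin (fun t' => gE c e (s, t')) ≤ gE c e (s, t) := fmin_le _ _
  simp only [thM]
  nlinarith

lemma thU_ge (c : Costs V Y) (e : V × V) (s : Y) :
    (1 / 2) * fmin (gE c e) ≤ thU c e s := by
  refine le_fmin fun t => ?_
  have h1 : thV c e t ≤ gE c e (s, t) - thM c e s := fmin_le _ _
  have h2 : fmin (gE c e) ≤ fmin (fun t' => gE c e (s, t')) :=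
    le_fmin fun t' => fmin_le _ _
  simp only [thM] at h1 ⊢
  nlinarith

lemma newpw_nonneg (c : Costs V Y) (e : V × V) (p : Y × Y) :
    0 ≤ gE c e p - thU c e p.1 - thV c e p.2 := by
  have h : thU c e p.1 ≤ gE c e (p.1, p.2) - thV c e p.2 := fmin_le _ _
  simpa using by linarith

lemma old_le_fmin_g (c : Costs V Y) (e : V × V) :
    fmin (c.un e.1) + fmin (c.un e.2) + fmin (c.pw e) ≤ fmin (gE c e) := by
  refine le_fmin fun p => ?_
  have h1 := fmin_le (c.un e.1) p.1
  have h2 := fmin_le (c.un e.2) p.2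
  have h3 := fmin_le (c.pw e) p
  simp only [gE]
  linarith

/-- The dual does not decrease when one edge (with distinct endpoints, in `E`) is processed. -/
lemma dual_le_processEdge {V : Type*} [Fintype V] [DecidableEq V]
    (E : Finset (V × V)) (c : Costs V Y) (e : V × V) (he : e ∈ E) (hne : e.1 ≠ e.2) :
    dual E c ≤ dual E (processEdge c e) := by
  rw [processEdge_eq]
  have h2mem : e.2 ∈ Finset.univ.erase e.1 :=
    Finset.mem_erase.mpr ⟨hne.symm, Finset.mem_univ _⟩
  -- unary sums
  have hun_old : (∑ u, fmin (c.un u)) =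
      fmin (c.un e.1) + (fmin (c.un e.2) +
        ∑ u ∈ (Finset.univ.erase e.1).erase e.2, fmin (c.un u)) := by
    rw [← Finset.add_sum_erase _ _ (Finset.mem_univ e.1),
      ← Finset.add_sum_erase _ _ h2mem]
  have hun_new : (∑ u, fmin (if u = e.1 then thU c e else if u = e.2 then thV c e else c.un u)) =
      fmin (thU c e) + (fmin (thV c e) +
        ∑ u ∈ (Finset.univ.erase e.1).erase e.2, fmin (c.un u)) := by
    rw [← Finset.add_sum_erase _ _ (Finset.mem_univ e.1),
      ← Finset.add_sum_erase _ _ h2mem]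
    congr 1
    · simp
    congr 1
    · simp [hne.symm]
    · refine Finset.sum_congr rfl fun u hu => ?_
      have h1 : u ≠ e.2 := (Finset.mem_erase.mp hu).1
      have h2 : u ≠ e.1 := (Finset.mem_erase.mp (Finset.mem_erase.mp hu).2).1
      simp [h1, h2]
  -- pairwise sums
  have hpw_old : (∑ e' ∈ E, fmin (c.pw e')) =
      fmin (c.pw e) + ∑ e' ∈ E.erase e, fmin (c.pw e') := by
    rw [← Finset.add_sum_erase _ _ he]
  have hpw_new : (∑ e' ∈ E, fmin (if e' = e then (fun p => gE c e p - thU c e p.1 - thV c e p.2)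
        else c.pw e')) =
      fmin (fun p => gE c e p - thU c e p.1 - thV c e p.2) +
        ∑ e' ∈ E.erase e, fmin (c.pw e') := by
    rw [← Finset.add_sum_erase _ _ he]
    congr 1
    · simp
    · refine Finset.sum_congr rfl fun e' he' => ?_
      have h1 : e' ≠ e := (Finset.mem_erase.mp he').1
      simp [h1]
  have key : fmin (c.un e.1) + fmin (c.un e.2) + fmin (c.pw e) ≤
      fmin (thU c e) + fmin (thV c e) +
        fmin (fun p => gE c e p - thU c e p.1 - thV c e p.2) := by
    have h0 : (0 : ℝ) ≤ fmin (fun p => gE c e p - thU c e p.1 - thV c e p.2) :=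
      le_fmin fun p => newpw_nonneg c e p
    have hu : (1 / 2) * fmin (gE c e) ≤ fmin (thU c e) := le_fmin (thU_ge c e)
    have hv : (1 / 2) * fmin (gE c e) ≤ fmin (thV c e) := le_fmin (thV_ge c e)
    have hold := old_le_fmin_g c e
    linarith
  simp only [dual]
  rw [hun_old, hpw_old]
  have : (∑ u, fmin ((
      { un := fun w => if w = e.1 then thU c e else if w = e.2 then thV c e else c.un w
        pw := fun e' => if e' = e then (fun p => gE c e p - thU c e p.1 - thV c e p.2)
              else c.pw e' } : Costs V Y).un u)) = fmin (thU c e) + (fmin (thV c e) +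
        ∑ u ∈ (Finset.univ.erase e.1).erase e.2, fmin (c.un u)) := by
    simpa using hun_new
  rw [this]
  have : (∑ e' ∈ E, fmin ((
      { un := fun w => if w = e.1 then thU c e else if w = e.2 then thV c e else c.un w
        pw := fun e' => if e' = e then (fun p => gE c e p - thU c e p.1 - thV c e p.2)
              else c.pw e' } : Costs V Y).pw e')) =
      fmin (fun p => gE c e p - thU c e p.1 - thV c e p.2) +
        ∑ e' ∈ E.erase e, fmin (c.pw e') := by
    simpa using hpw_new
  rw [this]
  linarith

/-- Energy of the constant labeling `y0`. -/
noncomputable def energy {V : Type*} [Fintype V]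
    (E : Finset (V × V)) (y0 : Y) (c : Costs V Y) : ℝ :=
  (∑ u, c.un u y0) + ∑ e ∈ E, c.pw e (y0, y0)

lemma dual_le_energy {V : Type*} [Fintype V]
    (E : Finset (V × V)) (y0 : Y) (c : Costs V Y) :
    dual E c ≤ energy E y0 c := by
  unfold dual energy
  gcongr with u _ e _
  · exact fmin_le _ _
  · exact fmin_le _ _

lemma energy_processEdge {V : Type*} [Fintype V] [DecidableEq V]
    (E : Finset (V × V)) (y0 : Y) (c : Costs V Y) (e : V × V)
    (he : e ∈ E) (hne : e.1 ≠ e.2) :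
    energy E y0 (processEdge c e) = energy E y0 c := by
  rw [processEdge_eq]
  unfold energy
  have h2mem : e.2 ∈ Finset.univ.erase e.1 :=
    Finset.mem_erase.mpr ⟨hne.symm, Finset.mem_univ _⟩
  have hun_old : (∑ u, c.un u y0) =
      c.un e.1 y0 + (c.un e.2 y0 + ∑ u ∈ (Finset.univ.erase e.1).erase e.2, c.un u y0) := by
    rw [← Finset.add_sum_erase _ _ (Finset.mem_univ e.1), ← Finset.add_sum_erase _ _ h2mem]
  have hun_new : (∑ u, (if u = e.1 then thU c e else if u = e.2 then thV c e else c.un u) y0) =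
      thU c e y0 + (thV c e y0 + ∑ u ∈ (Finset.univ.erase e.1).erase e.2, c.un u y0) := by
    rw [← Finset.add_sum_erase _ _ (Finset.mem_univ e.1), ← Finset.add_sum_erase _ _ h2mem]
    congr 1
    · simp
    congr 1
    · simp [hne.symm]
    · refine Finset.sum_congr rfl fun u hu => ?_
      have h1 : u ≠ e.2 := (Finset.mem_erase.mp hu).1
      have h2 : u ≠ e.1 := (Finset.mem_erase.mp (Finset.mem_erase.mp hu).2).1
      simp [h1, h2]
  have hpw_old : (∑ e' ∈ E, c.pw e' (y0, y0)) =
      c.pw e (y0, y0) + ∑ e' ∈ E.erase e, c.pw e' (y0, y0) := by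
    rw [← Finset.add_sum_erase _ _ he]
  have hpw_new : (∑ e' ∈ E, (if e' = e then (fun p => gE c e p - thU c e p.1 - thV c e p.2)
        else c.pw e') (y0, y0)) =
      (gE c e (y0, y0) - thU c e y0 - thV c e y0) + ∑ e' ∈ E.erase e, c.pw e' (y0, y0) := by
    rw [← Finset.add_sum_erase _ _ he]
    congr 1
    · simp
    · refine Finset.sum_congr rfl fun e' he' => ?_
      have h1 : e' ≠ e := (Finset.mem_erase.mp he').1
      simp [h1]
  simp only
  rw [hun_new, hpw_new, hun_old, hpw_old]
  simp only [gE]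
  ring

lemma dual_le_foldl {V : Type*} [Fintype V] [DecidableEq V]
    (E : Finset (V × V)) (hE : ∀ e ∈ E, e.1 ≠ e.2) (l : List (V × V))
    (hl : ∀ e ∈ l, e ∈ E) (c : Costs V Y) :
    dual E c ≤ dual E (l.foldl processEdge c) := by
  induction l generalizing c with
  | nil => simp
  | cons e l ih =>
    have he : e ∈ E := hl e List.mem_cons_self
    calc dual E c ≤ dual E (processEdge c e) := dual_le_processEdge E c e he (hE e he)
      _ ≤ dual E ((e :: l).foldl processEdge c) := by
          simpa using ih (fun e' h => hl e' (List.mem_cons_of_mem e h)) (processEdge c e)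

lemma energy_foldl {V : Type*} [Fintype V] [DecidableEq V]
    (E : Finset (V × V)) (hE : ∀ e ∈ E, e.1 ≠ e.2) (y0 : Y) (l : List (V × V))
    (hl : ∀ e ∈ l, e ∈ E) (c : Costs V Y) :
    energy E y0 (l.foldl processEdge c) = energy E y0 c := by
  induction l generalizing c with
  | nil => simp
  | cons e l ih =>
    have he : e ∈ E := hl e List.mem_cons_self
    calc energy E y0 ((e :: l).foldl processEdge c)
        = energy E y0 (processEdge c e) := by
          simpa using ih (fun e' h => hl e' (List.mem_cons_of_mem e h)) (processEdge c e)
      _ = energy E y0 c := energy_processEdge E y0 c e he (hE e he)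

end aux

/-- The dual values of the MPLP++ iterates form a nondecreasing sequence which is
bounded above and hence converges to a real limit. -/
theorem mplpp_dual_converges {V Y : Type*} [Fintype V] [Fintype Y] [Nonempty Y] [DecidableEq V]
    (E : Finset (V × V)) (hE : ∀ e ∈ E, e.1 ≠ e.2)
    (order : List (V × V)) (horder : ∀ e, e ∈ order ↔ e ∈ E) (hnodup : order.Nodup)
    (c : Costs V Y) :
    Monotone (fun i => dual E ((mplppIter order)^[i] c)) ∧
    BddAbove (Set.range fun i => dual E ((mplppIter order)^[i] c)) ∧
    ∃ L : ℝ, Filter.Tendsto (fun i => dual E ((mplppIter order)^[i] c)) Filter.atTop (nhds L) := by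
  have hl : ∀ e ∈ order, e ∈ E := fun e h => (horder e).mp h
  have hmono : Monotone (fun i => dual E ((mplppIter order)^[i] c)) := by
    apply monotone_nat_of_le_succ
    intro i
    rw [Function.iterate_succ_apply']
    exact dual_le_foldl E hE order hl _
  obtain ⟨y0⟩ := ‹Nonempty Y›
  have hbdd : BddAbove (Set.range fun i => dual E ((mplppIter order)^[i] c)) := by
    refine ⟨energy E y0 c, ?_⟩
    rintro x ⟨i, rfl⟩
    calc dual E ((mplppIter order)^[i] c) ≤ energy E y0 ((mplppIter order)^[i] c) :=
          dual_le_energy E y0 _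
      _ = energy E y0 c := by
          induction i with
          | zero => rfl
          | succ n ih =>
            rw [Function.iterate_succ_apply']
            rw [show mplppIter order ((mplppIter order)^[n] c)
                = order.foldl processEdge ((mplppIter order)^[n] c) from rfl]
            rw [energy_foldl E hE y0 order hl]
            exact ih
  exact ⟨hmono, hbdd, _, tendsto_atTop_ciSup hmono hbdd⟩
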